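/- If L ≥ log(2/δ)/√λ with 0 < δ < 1 and 0 < λ ≤ 1, then the success probability P(L, λ, δ) = 1 − δ²·T_L(T_{1/L}(1/δ)·√(1−λ))² satisfies 1 − δ² ≤ P(L, λ, δ) ≤ 1. -/
import Mathlib


/-- Inverse hyperbolic cosine. -/
noncomputable def arcosh (x : ℝ) : ℝ := Real.log (x + Real.sqrt (x ^ 2 - 1))

/-- The Chebyshev function of the first kind of (possibly non-integer) degree `s`,
defined via `cosh (s · arcosh x)` for `x ≥ 1` and `cos (s · arccos x)` otherwise. -/
noncomputable def Tcheb (s x : ℝ) : ℝ :=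
  if 1 ≤ x then Real.cosh (s * arcosh x) else Real.cos (s * Real.arccos x)

/-- The fixed-point amplitude-amplification success probability
`P(L, λ, δ) = 1 − δ² · T_L(T_{1/L}(1/δ) · √(1−λ))²`. -/
noncomputable def succProb (L : ℕ) (lam δ : ℝ) : ℝ :=
  1 - δ ^ 2 * (Tcheb L (Tcheb (1 / (L : ℝ)) (1 / δ) * Real.sqrt (1 - lam))) ^ 2

lemma arcosh_one : arcosh 1 = 0 := by
  simp [arcosh]

lemma Tcheb_sq_le_one (s x : ℝ) (hx : x ≤ 1) : (Tcheb s x) ^ 2 ≤ 1 := by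
  unfold Tcheb
  by_cases h : 1 ≤ x
  · have : x = 1 := le_antisymm hx h
    simp [this, arcosh_one]
  · rw [if_neg h]
    rw [sq_le_one_iff_abs_le_one]
    exact Real.abs_cos_le_one _

/-- Yoder–Low–Chuang convergence: if `L ≥ log(2/δ)/√λ` then
`1 − δ² ≤ P(L, λ, δ) ≤ 1`. -/
theorem succProb_converged (L : ℕ) (δ lam : ℝ)
    (hδ : 0 < δ) (hδ' : δ < 1) (hlam : 0 < lam) (hlam' : lam ≤ 1)
    (hL : Real.log (2 / δ) / Real.sqrt lam ≤ (L : ℝ)) :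
    1 - δ ^ 2 ≤ succProb L lam δ ∧ succProb L lam δ ≤ 1 := by
  have hδ1 : (1 : ℝ) ≤ 1 / δ := (le_div_iff₀ hδ).mpr (by linarith)
  have hsl : 0 < Real.sqrt lam := Real.sqrt_pos.mpr hlam
  have hlog2 : 0 < Real.log (2 / δ) :=
    Real.log_pos (by rw [lt_div_iff₀ hδ]; linarith)
  have hLpos : (0 : ℝ) < L := lt_of_lt_of_le (div_pos hlog2 hsl) hL
  -- arcosh bounds
  have hsq : Real.sqrt ((1 / δ) ^ 2 - 1) ≤ 1 / δ := by
    calc Real.sqrt ((1 / δ) ^ 2 - 1) ≤ Real.sqrt ((1 / δ) ^ 2) :=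
          Real.sqrt_le_sqrt (by linarith)
      _ = 1 / δ := Real.sqrt_sq (by positivity)
  have ha0 : 0 ≤ arcosh (1 / δ) := by
    apply Real.log_nonneg
    have := Real.sqrt_nonneg ((1 / δ) ^ 2 - 1)
    linarith
  have ha : arcosh (1 / δ) ≤ Real.log (2 / δ) := by
    unfold arcosh
    apply Real.log_le_log (by positivity)
    have : (2 : ℝ) / δ = 1 / δ + 1 / δ := by ring
    linarith
  -- x := Tcheb (1/L) (1/δ) * √(1−λ) ≤ 1
  have ht : 1 / (L : ℝ) * arcosh (1 / δ) ≤ Real.sqrt lam := by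
    rw [div_le_iff₀ hsl] at hL
    rw [div_mul_eq_mul_div, one_mul, div_le_iff₀ hLpos]
    calc arcosh (1 / δ) ≤ Real.log (2 / δ) := ha
      _ ≤ (L : ℝ) * Real.sqrt lam := hL
      _ = Real.sqrt lam * L := by ring
  have ht0 : 0 ≤ 1 / (L : ℝ) * arcosh (1 / δ) := by positivity
  have hcosh : Real.cosh (1 / (L : ℝ) * arcosh (1 / δ)) ≤ Real.exp (lam / 2) := by
    calc Real.cosh (1 / (L : ℝ) * arcosh (1 / δ)) ≤ Real.cosh (Real.sqrt lam) := by
          rw [Real.cosh_le_cosh]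
          rwa [abs_of_nonneg ht0, abs_of_nonneg hsl.le]
      _ ≤ Real.exp ((Real.sqrt lam) ^ 2 / 2) := Real.cosh_le_exp_half_sq _
      _ = Real.exp (lam / 2) := by rw [Real.sq_sqrt hlam.le]
  have hs1 : Real.sqrt (1 - lam) ≤ Real.exp (-(lam / 2)) := by
    calc Real.sqrt (1 - lam) ≤ Real.sqrt (Real.exp (-lam)) := by
          apply Real.sqrt_le_sqrt
          have := Real.add_one_le_exp (-lam)
          linarith
      _ = Real.exp (-(lam / 2)) := by
          rw [show -(lam / 2) = -lam / 2 by ring, Real.exp_half]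
  have hx1 : Tcheb (1 / (L : ℝ)) (1 / δ) * Real.sqrt (1 - lam) ≤ 1 := by
    rw [Tcheb, if_pos hδ1]
    calc Real.cosh (1 / (L : ℝ) * arcosh (1 / δ)) * Real.sqrt (1 - lam)
        ≤ Real.exp (lam / 2) * Real.exp (-(lam / 2)) := by
          apply mul_le_mul hcosh hs1 (Real.sqrt_nonneg _) (Real.exp_pos _).le
      _ = 1 := by rw [← Real.exp_add]; simp
  have hT := Tcheb_sq_le_one L (Tcheb (1 / (L : ℝ)) (1 / δ) * Real.sqrt (1 - lam)) hx1
  have hTnn : 0 ≤ (Tcheb L (Tcheb (1 / (L : ℝ)) (1 / δ) * Real.sqrt (1 - lam))) ^ 2 :=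
    sq_nonneg _
  have hδ2 : 0 < δ ^ 2 := by positivity
  unfold succProb
  constructor
  · nlinarith
  · nlinarith
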